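/- Let L(a,b) be a non-degenerate Lucas sequence of the first kind and let p ≥ 3 be a prime. If the characteristic roots λ_1, λ_2 of L(a,b) belong to ℚ_p (i.e. the discriminant D = a² + 4b is a square in ℚ_p), then the Kepler set of (L_n) is not all of ℚ_p: K((L_n)) ≠ ℚ_p. -/

import Mathlib

/-- The Kepler set of a sequence `a` in `ℚ_[p]`: the closure of the set of
consecutive ratios `a (n+1) / a n` over indices `n` with `a n ≠ 0`. -/
def keplerSet (p : ℕ) [Fact p.Prime] (a : ℕ → ℚ_[p]) : Set ℚ_[p] :=
  closure {x : ℚ_[p] | ∃ n : ℕ, a n ≠ 0 ∧ x = a (n + 1) / a n}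

/-- The Lucas sequence of the first kind `L(a,b)`:
`L 0 = 0`, `L 1 = 1`, `L n = a L (n-1) + b L (n-2)`. -/
def lucasSeq (a b : ℤ) : ℕ → ℤ
  | 0 => 0
  | 1 => 1
  | n + 2 => a * lucasSeq a b (n + 1) + b * lucasSeq a b n

lemma kepler_aux (p : ℕ) [Fact p.Prime] (μ₁ μ₂ : ℚ_[p]) (h1 : μ₁ ≠ 0)
    (hle : ‖μ₂‖ ≤ ‖μ₁‖)
    (hne : ∀ n : ℕ, 0 < n → μ₁ ^ n ≠ μ₂ ^ n)
    (L : ℕ → ℚ_[p])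
    (hBinet : ∀ n, L n * (μ₁ - μ₂) = μ₁ ^ n - μ₂ ^ n) (hL0 : L 0 = 0) :
    closure {x : ℚ_[p] | ∃ n : ℕ, L n ≠ 0 ∧ x = L (n + 1) / L n} ≠ Set.univ := by
  have hdne : μ₁ - μ₂ ≠ 0 := by
    intro h
    exact hne 1 one_pos (by rw [pow_one, pow_one]; exact sub_eq_zero.mp h)
  have hdpos : (0:ℝ) < ‖μ₁ - μ₂‖ := norm_pos_iff.mpr hdne
  have h1pos : (0:ℝ) < ‖μ₁‖ := norm_pos_iff.mpr h1
  have hLval : ∀ n, ‖L n‖ * ‖μ₁ - μ₂‖ = ‖μ₁ ^ n - μ₂ ^ n‖ := fun n => by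
    rw [← norm_mul, hBinet]
  have hstep : ∀ n, L (n + 1) - μ₁ * L n = μ₂ ^ n := by
    intro n
    have key : (L (n+1) - μ₁ * L n) * (μ₁ - μ₂) = μ₂ ^ n * (μ₁ - μ₂) := by
      linear_combination hBinet (n+1) - μ₁ * hBinet n
    exact mul_right_cancel₀ hdne key
  intro hK
  rcases eq_or_lt_of_le hle with heq | hlt
  · -- equal norms: μ₁ is not in the closure
    have hmem : μ₁ ∈ closure {x : ℚ_[p] | ∃ n : ℕ, L n ≠ 0 ∧ x = L (n + 1) / L n} := by
      rw [hK]; trivial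
    rw [Metric.mem_closure_iff] at hmem
    obtain ⟨x, hx, hdist⟩ := hmem ‖μ₁ - μ₂‖ hdpos
    obtain ⟨n, hLn, rfl⟩ := hx
    have hLnpos : (0:ℝ) < ‖L n‖ := norm_pos_iff.mpr hLn
    -- ‖μ₁^n - μ₂^n‖ ≤ ‖μ₂‖^n
    have hbound : ‖μ₁ ^ n - μ₂ ^ n‖ ≤ ‖μ₂‖ ^ n := by
      have := Padic.nonarchimedean (μ₁ ^ n) (-(μ₂ ^ n))
      rw [← sub_eq_add_neg, norm_neg, norm_pow, norm_pow, ← heq, max_self] at this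
      exact this
    have hxval : L (n+1) / L n - μ₁ = μ₂ ^ n / L n := by
      field_simp
      linear_combination hstep n
    have hge : ‖μ₁ - μ₂‖ ≤ ‖L (n+1) / L n - μ₁‖ := by
      rw [hxval, norm_div, norm_pow]
      rw [le_div_iff₀ hLnpos]
      calc ‖μ₁ - μ₂‖ * ‖L n‖ = ‖L n‖ * ‖μ₁ - μ₂‖ := by ring
        _ = ‖μ₁ ^ n - μ₂ ^ n‖ := hLval n
        _ ≤ ‖μ₂‖ ^ n := hbound
    rw [dist_eq_norm, ← norm_neg, neg_sub] at hdist
    exact absurd hdist (not_lt.mpr hge)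
  · -- ‖μ₂‖ < ‖μ₁‖ : the point p * μ₁ is not in the closure
    have hmem : (p : ℚ_[p]) * μ₁ ∈
        closure {x : ℚ_[p] | ∃ n : ℕ, L n ≠ 0 ∧ x = L (n + 1) / L n} := by
      rw [hK]; trivial
    rw [Metric.mem_closure_iff] at hmem
    obtain ⟨x, hx, hdist⟩ := hmem ‖μ₁‖ h1pos
    obtain ⟨n, hLn, rfl⟩ := hx
    have hn : n ≠ 0 := by rintro rfl; exact hLn hL0
    have hLnpos : (0:ℝ) < ‖L n‖ := norm_pos_iff.mpr hLn
    -- ‖μ₁^m - μ₂^m‖ = ‖μ₁‖^m for m ≥ 1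
    have hval : ∀ m : ℕ, m ≠ 0 → ‖μ₁ ^ m - μ₂ ^ m‖ = ‖μ₁‖ ^ m := by
      intro m hm
      have hlt' : ‖μ₂‖ ^ m < ‖μ₁‖ ^ m :=
        pow_lt_pow_left₀ hlt (norm_nonneg _) hm
      have hne' : ‖μ₁ ^ m‖ ≠ ‖-(μ₂ ^ m)‖ := by
        rw [norm_neg, norm_pow, norm_pow]; exact ne_of_gt hlt'
      have := Padic.add_eq_max_of_ne hne'
      rw [← sub_eq_add_neg, norm_neg, norm_pow, norm_pow] at this
      rw [this, max_eq_left (le_of_lt hlt')]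
    -- ‖L (n+1) / L n‖ = ‖μ₁‖
    have hratio : ‖L (n+1) / L n‖ = ‖μ₁‖ := by
      have e1 : ‖L (n+1)‖ * ‖μ₁ - μ₂‖ = ‖μ₁‖ ^ (n+1) := by
        rw [hLval (n+1), hval (n+1) (Nat.succ_ne_zero n)]
      have e0 : ‖L n‖ * ‖μ₁ - μ₂‖ = ‖μ₁‖ ^ n := by
        rw [hLval n, hval n hn]
      rw [norm_div]
      rw [div_eq_iff (ne_of_gt hLnpos)]
      have key : ‖L (n+1)‖ * ‖μ₁ - μ₂‖ = (‖μ₁‖ * ‖L n‖) * ‖μ₁ - μ₂‖ := by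
        rw [e1, mul_assoc, e0, pow_succ]; ring
      exact mul_right_cancel₀ (ne_of_gt hdpos) key
    -- ‖p * μ₁‖ < ‖μ₁‖
    have hz : ‖(p : ℚ_[p]) * μ₁‖ < ‖μ₁‖ := by
      rw [norm_mul]
      have : ‖(p : ℚ_[p])‖ < 1 := Padic.norm_p_lt_one
      calc ‖(p:ℚ_[p])‖ * ‖μ₁‖ < 1 * ‖μ₁‖ := by
            exact mul_lt_mul_of_pos_right this h1pos
        _ = ‖μ₁‖ := one_mul _
    have hdd : dist ((p : ℚ_[p]) * μ₁) (L (n+1) / L n) = ‖μ₁‖ := by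
      rw [dist_eq_norm, sub_eq_add_neg]
      have hne' : ‖(p : ℚ_[p]) * μ₁‖ ≠ ‖-(L (n+1) / L n)‖ := by
        rw [norm_neg, hratio]; exact ne_of_lt hz
      rw [Padic.add_eq_max_of_ne hne', norm_neg, hratio,
        max_eq_right (le_of_lt hz)]
    rw [hdd] at hdist
    exact lt_irrefl _ hdist

theorem stmt_8 (p : ℕ) [Fact p.Prime] (hp : 3 ≤ p)
    (a b : ℤ) (ha : a ≠ 0) (hb : b ≠ 0)
    -- the discriminant `D = a² + 4b` is a square in `ℚ_p`, with square root `δ`,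
    -- so the characteristic roots `λ₁, λ₂` lie in `ℚ_p`
    (δ : ℚ_[p]) (hδ : δ ^ 2 = ((a ^ 2 + 4 * b : ℤ) : ℚ_[p]))
    (lam₁ lam₂ : ℚ_[p])
    (hlam₁ : lam₁ = ((a : ℚ_[p]) + δ) / 2) (hlam₂ : lam₂ = ((a : ℚ_[p]) - δ) / 2)
    -- `L(a,b)` is non-degenerate: `λ₂/λ₁` is not a root of unity
    (hnd : ∀ n : ℕ, 0 < n → (lam₂ / lam₁) ^ n ≠ 1) :
    keplerSet p (fun n => (lucasSeq a b n : ℚ_[p])) ≠ Set.univ := by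
  have h2 : (2 : ℚ_[p]) ≠ 0 := two_ne_zero
  push_cast at hδ
  have hsum : lam₁ + lam₂ = (a : ℚ_[p]) := by rw [hlam₁, hlam₂]; field_simp; ring
  have hprod : lam₁ * lam₂ = -(b : ℚ_[p]) := by
    rw [hlam₁, hlam₂]
    field_simp
    linear_combination -hδ
  have hbne : (b : ℚ_[p]) ≠ 0 := Int.cast_ne_zero.mpr hb
  have h1 : lam₁ ≠ 0 := by
    intro h; apply hbne
    have : lam₁ * lam₂ = 0 := by rw [h, zero_mul]
    rw [hprod] at this
    exact neg_eq_zero.mp this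
  have h2' : lam₂ ≠ 0 := by
    intro h; apply hbne
    have : lam₁ * lam₂ = 0 := by rw [h, mul_zero]
    rw [hprod] at this
    exact neg_eq_zero.mp this
  have hne : ∀ n : ℕ, 0 < n → lam₁ ^ n ≠ lam₂ ^ n := by
    intro n hn h
    apply hnd n hn
    rw [div_pow, ← h, div_self (pow_ne_zero n h1)]
  have hBinet : ∀ n, ((lucasSeq a b n : ℤ) : ℚ_[p]) * (lam₁ - lam₂)
      = lam₁ ^ n - lam₂ ^ n := by
    intro n
    induction n using Nat.strong_induction_on with
    | _ n ih =>
      match n with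
      | 0 => simp [lucasSeq]
      | 1 => simp [lucasSeq]
      | (m+2) =>
        have i1 := ih (m+1) (by omega)
        have i0 := ih m (by omega)
        have hrec : ((lucasSeq a b (m+2) : ℤ) : ℚ_[p])
            = (a : ℚ_[p]) * (lucasSeq a b (m+1) : ℤ) + (b : ℚ_[p]) * (lucasSeq a b m : ℤ) := by
          rw [show lucasSeq a b (m+2) = a * lucasSeq a b (m+1) + b * lucasSeq a b m from rfl]
          push_cast; ring
        rw [hrec, show (a : ℚ_[p]) = lam₁ + lam₂ from hsum.symm,
          show (b : ℚ_[p]) = -(lam₁ * lam₂) from by rw [hprod, neg_neg]]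
        linear_combination (lam₁ + lam₂) * i1 - (lam₁ * lam₂) * i0
  show closure {x : ℚ_[p] | ∃ n : ℕ, ((lucasSeq a b n : ℤ) : ℚ_[p]) ≠ 0 ∧
      x = ((lucasSeq a b (n+1) : ℤ) : ℚ_[p]) / ((lucasSeq a b n : ℤ) : ℚ_[p])} ≠ Set.univ
  rcases le_total ‖lam₂‖ ‖lam₁‖ with hle | hle
  · exact kepler_aux p lam₁ lam₂ h1 hle hne _ hBinet (by simp [lucasSeq])
  · refine kepler_aux p lam₂ lam₁ h2' hle (fun n hn h => hne n hn h.symm) _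
      (fun n => by linear_combination -hBinet n) (by simp [lucasSeq])
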